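/- If Y is independent of the pair (X, Z), all taking values in an abelian group G, then H(Y) + H(X − Z) ≤ H(X − Y) + H(Y − Z). -/

import Mathlib

open MeasureTheory ProbabilityTheory Real

/-- Shannon entropy (natural log) of a finitely-valued random variable. -/
noncomputable def ent {Ω S : Type*} [MeasurableSpace Ω] [Fintype S]
    (μ : Measure Ω) (X : Ω → S) : ℝ :=
  ∑ s : S, Real.negMulLog ((μ (X ⁻¹' {s})).toReal)

section helpers

open Finset

lemma my_meas_fiber' {Ω : Type*} [MeasurableSpace Ω] (μ : Measure Ω) [IsFiniteMeasure μ]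
    {S I : Type*} [Fintype I] [MeasurableSpace S] [MeasurableSingletonClass S]
    {T : Ω → S} (hT : Measurable T) {g : I → S} (hg : Function.Injective g)
    {A : Set Ω} (hA : A = ⋃ i, T ⁻¹' {g i}) :
    (μ A).toReal = ∑ i, (μ (T ⁻¹' {g i})).toReal := by
  have hd : Pairwise (Function.onFun Disjoint fun i => T ⁻¹' {g i}) := by
    intro i j hij
    simp only [Function.onFun, Set.disjoint_left]
    intro ω hi hj
    exact hij (hg ((Set.mem_preimage.mp hi).symm.trans (Set.mem_preimage.mp hj)))
  rw [hA, measure_iUnion hd (fun i => hT (measurableSet_singleton _)), tsum_fintype,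
    ENNReal.toReal_sum (fun i _ => measure_ne_top μ _)]

variable {G : Type*} [AddCommGroup G] [Fintype G]


variable {G : Type*} [AddCommGroup G] [Fintype G]

omit [AddCommGroup G] in
lemma my_sum_marg (p : G × G × G → ℝ) (m : G → ℝ) (e : G × G × G ≃ G × G × G)
    (hm : ∀ u, m u = ∑ yz : G × G, p (e (u, yz.1, yz.2))) :
    ∑ u, m u = ∑ t, p t := by
  rw [← Equiv.sum_comp e p, Fintype.sum_prod_type]
  exact Finset.sum_congr rfl fun u _ => hm u

omit [AddCommGroup G] in
lemma my_sum_negMulLog_eq (p : G × G × G → ℝ) (m : G → ℝ) (e : G × G × G ≃ G × G × G)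
    (f : G × G × G → G) (hf : ∀ t, f (e t) = t.1)
    (hm : ∀ u, m u = ∑ yz : G × G, p (e (u, yz.1, yz.2))) :
    ∑ u, Real.negMulLog (m u) = ∑ t, -(p t * Real.log (m (f t))) := by
  rw [← Equiv.sum_comp e (fun t => -(p t * Real.log (m (f t))))]
  simp only [hf]
  rw [Fintype.sum_prod_type]
  refine Finset.sum_congr rfl fun u _ => ?_
  have h2 : ∑ yz : G × G, -(p (e (u, yz.1, yz.2)) * Real.log (m u))
      = -((∑ yz : G × G, p (e (u, yz.1, yz.2))) * Real.log (m u)) := by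
    rw [Finset.sum_mul, Finset.sum_neg_distrib]
  rw [show (∑ b : G × G, -(p (e (u, b)) * Real.log (m u)))
      = ∑ yz : G × G, -(p (e (u, yz.1, yz.2)) * Real.log (m u)) from rfl, h2, ← hm u,
    Real.negMulLog, neg_mul]

lemma my_core (p : G × G × G → ℝ) (q a b c : G → ℝ) (r : G → G → ℝ)
    (hp0 : ∀ t, 0 ≤ p t) (hp1 : ∑ t, p t = 1)
    (hq : ∀ y, q y = ∑ xz : G × G, p (xz.1, y, xz.2))
    (ha : ∀ u, a u = ∑ yz : G × G, p (u + yz.1, yz.1, yz.2))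
    (hb : ∀ v, b v = ∑ xz : G × G, p (xz.1, v + xz.2, xz.2))
    (hc : ∀ w, c w = ∑ zy : G × G, p (w + zy.1, zy.2, zy.1))
    (hr : ∀ x z, r x z = ∑ y, p (x, y, z))
    (hpq : ∀ x y z, p (x, y, z) = q y * r x z) :
    ∑ y, negMulLog (q y) + ∑ w, negMulLog (c w) ≤
      ∑ u, negMulLog (a u) + ∑ v, negMulLog (b v) := by
  classical
  -- the reparametrizing equivalences
  set eQ : G × G × G ≃ G × G × G :=
    ⟨fun t => (t.2.1, t.1, t.2.2), fun t => (t.2.1, t.1, t.2.2),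
      fun ⟨y, x, z⟩ => rfl, fun ⟨x, y, z⟩ => rfl⟩ with heQ
  set eA : G × G × G ≃ G × G × G :=
    ⟨fun t => (t.1 + t.2.1, t.2.1, t.2.2), fun t => (t.1 - t.2.1, t.2.1, t.2.2),
      fun ⟨u, y, z⟩ => Prod.ext_iff.mpr ⟨by simp, rfl⟩,
      fun ⟨x, y, z⟩ => Prod.ext_iff.mpr ⟨by simp, rfl⟩⟩ with heA
  set eB : G × G × G ≃ G × G × G :=
    ⟨fun t => (t.2.1, t.1 + t.2.2, t.2.2), fun t => (t.2.1 - t.2.2, t.1, t.2.2),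
      fun ⟨v, x, z⟩ => Prod.ext_iff.mpr ⟨by simp, rfl⟩,
      fun ⟨x, y, z⟩ => Prod.ext_iff.mpr ⟨rfl, Prod.ext_iff.mpr ⟨by simp, rfl⟩⟩⟩ with heB
  set eC : G × G × G ≃ G × G × G :=
    ⟨fun t => (t.1 + t.2.1, t.2.2, t.2.1), fun t => (t.1 - t.2.2, t.2.2, t.2.1),
      fun ⟨w, z, y⟩ => Prod.ext_iff.mpr ⟨by simp, rfl⟩,
      fun ⟨x, y, z⟩ => Prod.ext_iff.mpr ⟨by simp, rfl⟩⟩ with heC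
  set eS : G × G × G ≃ G × G × G :=
    ⟨fun t => (t.1 + t.2.2, t.1 + t.2.2 - t.2.1, t.2.2),
      fun t => (t.1 - t.2.2, t.1 - t.2.1, t.2.2),
      fun ⟨w, u, z⟩ => Prod.ext_iff.mpr ⟨by simp, Prod.ext_iff.mpr ⟨by simp, rfl⟩⟩,
      fun ⟨x, y, z⟩ => Prod.ext_iff.mpr ⟨by simp, Prod.ext_iff.mpr ⟨by simp, rfl⟩⟩⟩ with heS
  have hmq : ∀ u, q u = ∑ yz : G × G, p (eQ (u, yz.1, yz.2)) := hq
  have hma : ∀ u, a u = ∑ yz : G × G, p (eA (u, yz.1, yz.2)) := ha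
  have hmb : ∀ u, b u = ∑ yz : G × G, p (eB (u, yz.1, yz.2)) := hb
  have hmc : ∀ u, c u = ∑ yz : G × G, p (eC (u, yz.1, yz.2)) := hc
  have hsa : ∑ u, a u = 1 := (my_sum_marg p a eA hma).trans hp1
  have hsb : ∑ v, b v = 1 := (my_sum_marg p b eB hmb).trans hp1
  -- nonnegativity of marginals
  have hq0 : ∀ y, 0 ≤ q y := fun y => by
    rw [hq]; exact Finset.sum_nonneg fun i _ => hp0 _
  have ha0 : ∀ u, 0 ≤ a u := fun u => by
    rw [ha]; exact Finset.sum_nonneg fun i _ => hp0 _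
  have hb0 : ∀ v, 0 ≤ b v := fun v => by
    rw [hb]; exact Finset.sum_nonneg fun i _ => hp0 _
  have hc0 : ∀ w, 0 ≤ c w := fun w => by
    rw [hc]; exact Finset.sum_nonneg fun i _ => hp0 _
  have hr0 : ∀ x z, 0 ≤ r x z := fun x z => by
    rw [hr]; exact Finset.sum_nonneg fun i _ => hp0 _
  -- entropy expansions over the triple space
  have EQ := my_sum_negMulLog_eq p q eQ (fun t => t.2.1) (fun t => rfl) hmq
  have EA := my_sum_negMulLog_eq p a eA (fun t => t.1 - t.2.1)
    (fun t => by simp [heA]) hma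
  have EB := my_sum_negMulLog_eq p b eB (fun t => t.2.1 - t.2.2)
    (fun t => by simp [heB]) hmb
  have EC := my_sum_negMulLog_eq p c eC (fun t => t.1 - t.2.2)
    (fun t => by simp [heC]) hmc
  -- the pointwise quantities
  set D : G × G × G → ℝ := fun t =>
    p t * (Real.log (a (t.1 - t.2.1)) + Real.log (b (t.2.1 - t.2.2))
      - Real.log (q t.2.1) - Real.log (c (t.1 - t.2.2))) with hD
  set S : G × G × G → ℝ := fun t =>
    p t * (a (t.1 - t.2.1) * b (t.2.1 - t.2.2)) / (q t.2.1 * c (t.1 - t.2.2)) with hS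
  set S' : G × G × G → ℝ := fun t =>
    r t.1 t.2.2 * (a (t.1 - t.2.1) * b (t.2.1 - t.2.2)) / c (t.1 - t.2.2) with hS'
  -- termwise bound D ≤ S - p
  have hDS : ∀ t, D t ≤ S t - p t := by
    rintro ⟨x, y, z⟩
    rcases eq_or_lt_of_le (hp0 (x, y, z)) with h0 | hpos
    · simp [hD, hS, ← h0]
    · have hax : p (x, y, z) ≤ a (x - y) := by
        have h := Finset.single_le_sum
          (f := fun yz : G × G => p (x - y + yz.1, yz.1, yz.2))
          (fun i _ => hp0 _) (Finset.mem_univ (y, z))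
        rw [ha]
        simpa using h
      have hbx : p (x, y, z) ≤ b (y - z) := by
        have h := Finset.single_le_sum
          (f := fun xz : G × G => p (xz.1, y - z + xz.2, xz.2))
          (fun i _ => hp0 _) (Finset.mem_univ (x, z))
        rw [hb]
        simpa using h
      have hqx : p (x, y, z) ≤ q y := by
        have h := Finset.single_le_sum
          (f := fun xz : G × G => p (xz.1, y, xz.2))
          (fun i _ => hp0 _) (Finset.mem_univ (x, z))
        rw [hq]
        simpa using h
      have hcx : p (x, y, z) ≤ c (x - z) := by
        have h := Finset.single_le_sum
          (f := fun zy : G × G => p (x - z + zy.1, zy.2, zy.1))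
          (fun i _ => hp0 _) (Finset.mem_univ (z, y))
        rw [hc]
        simpa using h
      have h1 : 0 < a (x - y) := hpos.trans_le hax
      have h2 : 0 < b (y - z) := hpos.trans_le hbx
      have h3 : 0 < q y := hpos.trans_le hqx
      have h4 : 0 < c (x - z) := hpos.trans_le hcx
      have hXpos : 0 < a (x - y) * b (y - z) / (q y * c (x - z)) := by positivity
      have hlog := Real.log_le_sub_one_of_pos hXpos
      have hexp : Real.log (a (x - y) * b (y - z) / (q y * c (x - z)))
          = Real.log (a (x - y)) + Real.log (b (y - z))
            - Real.log (q y) - Real.log (c (x - z)) := by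
        rw [Real.log_div (mul_pos h1 h2).ne' (mul_pos h3 h4).ne',
          Real.log_mul h1.ne' h2.ne', Real.log_mul h3.ne' h4.ne']
        ring
      have := mul_le_mul_of_nonneg_left hlog hpos.le
      simp only [hD, hS]
      calc p (x, y, z) * (Real.log (a (x - y)) + Real.log (b (y - z))
            - Real.log (q y) - Real.log (c (x - z)))
          = p (x, y, z) * Real.log (a (x - y) * b (y - z) / (q y * c (x - z))) := by
            rw [hexp]
        _ ≤ p (x, y, z) * (a (x - y) * b (y - z) / (q y * c (x - z)) - 1) := this
        _ = p (x, y, z) * (a (x - y) * b (y - z)) / (q y * c (x - z)) - p (x, y, z) := by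
            ring
  -- S ≤ S'
  have hSS' : ∀ t, S t ≤ S' t := by
    rintro ⟨x, y, z⟩
    simp only [hS, hS']
    rw [hpq x y z]
    rcases eq_or_ne (q y) 0 with h | h
    · rw [h]
      simp only [zero_mul, mul_zero, zero_div]
      exact div_nonneg (mul_nonneg (hr0 x z) (mul_nonneg (ha0 _) (hb0 _))) (hc0 _)
    · rw [show q y * r x z * (a (x - y) * b (y - z))
          = q y * (r x z * (a (x - y) * b (y - z))) from by ring,
        mul_div_mul_left _ _ h]
  -- sum of S' is at most 1
  have hcr : ∀ w, ∑ z, r (w + z) z = c w := by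
    intro w
    rw [hc w, Fintype.sum_prod_type]
    exact Finset.sum_congr rfl fun z _ => hr (w + z) z
  have hS'sum : ∑ t, S' t ≤ 1 := by
    have hre : ∑ t, S' t = ∑ w, ∑ u, ∑ z, S' (w + z, w + z - u, z) := by
      rw [← Equiv.sum_comp eS S', Fintype.sum_prod_type]
      refine Finset.sum_congr rfl fun w _ => ?_
      rw [Fintype.sum_prod_type]
      rfl
    have hterm : ∀ w u z, S' (w + z, w + z - u, z)
        = r (w + z) z * (a u * b (w - u)) / c w := by
      intro w u z
      simp only [hS']
      have e1 : w + z - (w + z - u) = u := by simp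
      have e2 : w + z - u - z = w - u := by rw [sub_right_comm, add_sub_cancel_right]
      have e3 : w + z - z = w := by simp
      rw [e1, e2, e3]
    calc ∑ t, S' t = ∑ w, ∑ u, ∑ z, r (w + z) z * (a u * b (w - u)) / c w := by
          rw [hre]
          exact Finset.sum_congr rfl fun w _ => Finset.sum_congr rfl fun u _ =>
            Finset.sum_congr rfl fun z _ => hterm w u z
      _ = ∑ w, ∑ u, c w * (a u * b (w - u)) / c w := by
          refine Finset.sum_congr rfl fun w _ => Finset.sum_congr rfl fun u _ => ?_
          rw [← Finset.sum_div, ← Finset.sum_mul, hcr w]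
      _ ≤ ∑ w, ∑ u, a u * b (w - u) := by
          refine Finset.sum_le_sum fun w _ => Finset.sum_le_sum fun u _ => ?_
          rcases eq_or_ne (c w) 0 with h | h
          · rw [h]
            simp only [zero_mul, zero_div]
            exact mul_nonneg (ha0 u) (hb0 (w - u))
          · rw [mul_div_cancel_left₀ _ h]
      _ = ∑ u, ∑ w, a u * b (w - u) := Finset.sum_comm
      _ = ∑ u, a u * ∑ w, b (w - u) := by
          refine Finset.sum_congr rfl fun u _ => ?_
          rw [Finset.mul_sum]
      _ = ∑ u, a u * 1 := by
          refine Finset.sum_congr rfl fun u _ => ?_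
          rw [show ∑ w, b (w - u) = ∑ v, b v from
            Fintype.sum_equiv (Equiv.subRight u) _ _ (fun w => rfl), hsb]
      _ = 1 := by simp [hsa]
  -- conclude
  have hsumD : ∑ t, D t ≤ 0 := by
    calc ∑ t, D t ≤ ∑ t, (S t - p t) := Finset.sum_le_sum fun t _ => hDS t
      _ = ∑ t, S t - ∑ t, p t := Finset.sum_sub_distrib _ _
      _ ≤ ∑ t, S' t - 1 := by
          rw [hp1]
          exact sub_le_sub_right (Finset.sum_le_sum fun t _ => hSS' t) 1
      _ ≤ 0 := by linarith
  have expand : (∑ u, negMulLog (a u) + ∑ v, negMulLog (b v))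
      - (∑ y, negMulLog (q y) + ∑ w, negMulLog (c w)) = ∑ t, -D t := by
    rw [EQ, EA, EB, EC, ← Finset.sum_add_distrib, ← Finset.sum_add_distrib,
      ← Finset.sum_sub_distrib]
    refine Finset.sum_congr rfl fun t _ => ?_
    simp only [hD]
    ring
  have : 0 ≤ ∑ t, -D t := by
    rw [Finset.sum_neg_distrib]
    linarith
  linarith [expand, this]

end helpers

theorem stmt5 {Ω G : Type*} [MeasurableSpace Ω] [AddCommGroup G] [Fintype G]
    [MeasurableSpace G] [MeasurableSingletonClass G]
    (μ : Measure Ω) [IsProbabilityMeasure μ]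
    (X Y Z : Ω → G) (hX : Measurable X) (hY : Measurable Y) (hZ : Measurable Z)
    (hind : IndepFun Y (fun ω => (X ω, Z ω)) μ) :
    ent μ Y + ent μ (fun ω => X ω - Z ω) ≤
      ent μ (fun ω => X ω - Y ω) + ent μ (fun ω => Y ω - Z ω) := by
  classical
  classical
  set T : Ω → G × G × G := fun ω => (X ω, Y ω, Z ω) with hT_def
  have hT : Measurable T := hX.prodMk (hY.prodMk hZ)
  set p : G × G × G → ℝ := fun t => (μ (T ⁻¹' {t})).toReal with hp_def
  set q : G → ℝ := fun y => (μ (Y ⁻¹' {y})).toReal with hq_def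
  set a : G → ℝ := fun u => (μ ((fun ω => X ω - Y ω) ⁻¹' {u})).toReal with ha_def
  set b : G → ℝ := fun v => (μ ((fun ω => Y ω - Z ω) ⁻¹' {v})).toReal with hb_def
  set c : G → ℝ := fun w => (μ ((fun ω => X ω - Z ω) ⁻¹' {w})).toReal with hc_def
  set r : G → G → ℝ := fun x z => (μ ((fun ω => (X ω, Z ω)) ⁻¹' {(x, z)})).toReal with hr_def
  have hp0 : ∀ t, 0 ≤ p t := fun t => ENNReal.toReal_nonneg
  have hp1 : ∑ t, p t = 1 := by
    have h := my_meas_fiber' μ hT (g := fun t : G × G × G => t)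
      Function.injective_id (A := Set.univ) (by ext ω; simp)
    simp only [measure_univ, ENNReal.toReal_one] at h
    exact h.symm
  have hq : ∀ y, q y = ∑ xz : G × G, p (xz.1, y, xz.2) := by
    intro y
    exact my_meas_fiber' μ hT (g := fun xz : G × G => (xz.1, y, xz.2))
      (fun i j h => by
        simp only [Prod.mk.injEq] at h
        exact Prod.ext_iff.mpr ⟨h.1, h.2.2⟩)
      (by
        ext ω
        simp only [Set.mem_preimage, Set.mem_iUnion, Set.mem_singleton_iff, hT_def,
          Prod.mk.injEq]
        constructor
        · intro h; exact ⟨(X ω, Z ω), rfl, h, rfl⟩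
        · rintro ⟨xz, h⟩; exact h.2.1)
  have ha : ∀ u, a u = ∑ yz : G × G, p (u + yz.1, yz.1, yz.2) := by
    intro u
    exact my_meas_fiber' μ hT (g := fun yz : G × G => (u + yz.1, yz.1, yz.2))
      (fun i j h => by
        simp only [Prod.mk.injEq] at h
        exact Prod.ext_iff.mpr ⟨h.2.1, h.2.2⟩)
      (by
        ext ω
        simp only [Set.mem_preimage, Set.mem_iUnion, Set.mem_singleton_iff, hT_def,
          Prod.mk.injEq]
        constructor
        · intro h
          exact ⟨(Y ω, Z ω), by rw [← h]; simp, rfl, rfl⟩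
        · rintro ⟨yz, h1, h2, h3⟩
          rw [h1, h2]
          simp)
  have hb : ∀ v, b v = ∑ xz : G × G, p (xz.1, v + xz.2, xz.2) := by
    intro v
    exact my_meas_fiber' μ hT (g := fun xz : G × G => (xz.1, v + xz.2, xz.2))
      (fun i j h => by
        simp only [Prod.mk.injEq] at h
        exact Prod.ext_iff.mpr ⟨h.1, h.2.2⟩)
      (by
        ext ω
        simp only [Set.mem_preimage, Set.mem_iUnion, Set.mem_singleton_iff, hT_def,
          Prod.mk.injEq]
        constructor
        · intro h
          exact ⟨(X ω, Z ω), rfl, by rw [← h]; simp, rfl⟩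
        · rintro ⟨xz, h1, h2, h3⟩
          rw [h2, h3]
          simp)
  have hc : ∀ w, c w = ∑ zy : G × G, p (w + zy.1, zy.2, zy.1) := by
    intro w
    exact my_meas_fiber' μ hT (g := fun zy : G × G => (w + zy.1, zy.2, zy.1))
      (fun i j h => by
        simp only [Prod.mk.injEq] at h
        exact Prod.ext_iff.mpr ⟨h.2.2, h.2.1⟩)
      (by
        ext ω
        simp only [Set.mem_preimage, Set.mem_iUnion, Set.mem_singleton_iff, hT_def,
          Prod.mk.injEq]
        constructor
        · intro h
          exact ⟨(Z ω, Y ω), by rw [← h]; simp, rfl, rfl⟩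
        · rintro ⟨zy, h1, h2, h3⟩
          rw [h1, h3]
          simp)
  have hr : ∀ x z, r x z = ∑ y, p (x, y, z) := by
    intro x z
    exact my_meas_fiber' μ hT (g := fun y : G => (x, y, z))
      (fun i j h => by
        simp only [Prod.mk.injEq] at h
        exact h.2.1)
      (by
        ext ω
        simp only [Set.mem_preimage, Set.mem_iUnion, Set.mem_singleton_iff, hT_def,
          Prod.mk.injEq]
        constructor
        · intro h
          exact ⟨Y ω, h.1, rfl, h.2⟩
        · rintro ⟨y, h1, h2, h3⟩
          exact ⟨h1, h3⟩)
  have hpq : ∀ x y z, p (x, y, z) = q y * r x z := by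
    intro x y z
    have hset : T ⁻¹' {(x, y, z)}
        = Y ⁻¹' {y} ∩ (fun ω => (X ω, Z ω)) ⁻¹' {(x, z)} := by
      ext ω
      simp only [Set.mem_preimage, Set.mem_singleton_iff, Set.mem_inter_iff, hT_def,
        Prod.mk.injEq]
      tauto
    have hmul := hind.measure_inter_preimage_eq_mul {y} {(x, z)}
      (measurableSet_singleton _) (measurableSet_singleton _)
    simp only [hp_def, hq_def, hr_def, hset, hmul, ENNReal.toReal_mul]
  exact my_core p q a b c r hp0 hp1 hq ha hb hc hr hpq
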